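/- For any θ ∈ (0,1), any y ∈ ℝ, z, ẑ ∈ ℝ^d, and any function g : ℝ^d → ℝ that is concave and satisfies |g(w)| ≤ α + β|y| + (γ/2)|w|² for all w, the inequality g(ẑ) ≥ θ g(z) − (1−θ)(α + β|y|) − (γ/(2(1−θ)))|θz − ẑ|² holds. -/

import Mathlib

theorem stmt_8 {d : ℕ} (α β γ θ y : ℝ) (hα : 0 ≤ α) (hβ : 0 ≤ β) (hγ : 0 < γ)
    (hθ : θ ∈ Set.Ioo (0:ℝ) 1)
    (g : EuclideanSpace ℝ (Fin d) → ℝ) (hconc : ConcaveOn ℝ Set.univ g)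
    (hg : ∀ w, |g w| ≤ α + β * |y| + γ / 2 * ‖w‖ ^ 2)
    (z zhat : EuclideanSpace ℝ (Fin d)) :
    θ * g z - (1 - θ) * (α + β * |y|) - γ / (2 * (1 - θ)) * ‖θ • z - zhat‖ ^ 2 ≤ g zhat := by
  obtain ⟨hθ0, hθ1⟩ := hθ
  have h1θ : (0:ℝ) < 1 - θ := by linarith
  set w : EuclideanSpace ℝ (Fin d) := (1 / (1 - θ)) • (zhat - θ • z) with hw
  have hcomb : θ • z + (1 - θ) • w = zhat := by
    rw [hw, smul_smul]
    rw [mul_one_div, div_self h1θ.ne', one_smul]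
    abel
  have hconc' := hconc.2 (Set.mem_univ z) (Set.mem_univ w) hθ0.le h1θ.le (by ring)
  rw [hcomb] at hconc'
  have hnw : ‖w‖ = ‖θ • z - zhat‖ / (1 - θ) := by
    rw [hw, norm_smul]
    rw [← neg_sub (θ • z) zhat, norm_neg]
    simp [abs_of_pos h1θ, one_div, div_eq_inv_mul]
  have hgw : -(α + β * |y|) - γ / 2 * (‖θ • z - zhat‖ ^ 2 / (1 - θ) ^ 2) ≤ g w := by
    have := hg w
    have h := (abs_le.mp this).1
    rw [hnw, div_pow] at h
    linarith
  have key : θ * g z + (1 - θ) * g w ≤ g zhat := by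
    simpa [smul_eq_mul] using hconc'
  have hmul : (1 - θ) * (-(α + β * |y|) - γ / 2 * (‖θ • z - zhat‖ ^ 2 / (1 - θ) ^ 2)) ≤ (1 - θ) * g w :=
    mul_le_mul_of_nonneg_left hgw h1θ.le
  have heq : (1 - θ) * (-(α + β * |y|) - γ / 2 * (‖θ • z - zhat‖ ^ 2 / (1 - θ) ^ 2)) =
      -(1 - θ) * (α + β * |y|) - γ / (2 * (1 - θ)) * ‖θ • z - zhat‖ ^ 2 := by
    field_simp
  rw [heq] at hmul
  linarith
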